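/- Let Ω ∈ RS(M) and let Ω(1) and Ω(−1) denote the strong limit values of Ω(x) as x → 1⁻ and x → −1⁺ respectively. Then the following are equivalent: (i) Ω(1)² = Ω(−1)² = I; (ii) ((Ω(1) − Ω(−1))/2)² = (Ω(1) − Ω(−1))/2 and ((Ω(1) + Ω(−1))/2)² = I − (Ω(1) − Ω(−1))/2. -/

import Mathlib

open Complex ContinuousLinearMap

noncomputable section

variable {M : Type*} [NormedAddCommGroup M] [InnerProductSpace ℂ M] [CompleteSpace M]
  [TopologicalSpace.SeparableSpace M]

/-- The domain `Z = ℂ ∖ ((−∞,−1] ∪ [1,+∞))`. -/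
def Zdom : Set ℂ := {z : ℂ | z ∉ (fun x : ℝ => (x : ℂ)) '' (Set.Iic (-1) ∪ Set.Ici 1)}

/-- The combined Nevanlinna–Schur class `RS(M)`. -/
def IsRS (Ω : ℂ → (M →L[ℂ] M)) : Prop :=
  DifferentiableOn ℂ Ω Zdom ∧
  (∀ z ∈ Zdom, Ω (starRingEnd ℂ z) = adjoint (Ω z)) ∧
  (∀ z ∈ Zdom, z.im ≠ 0 → ∀ f : M, 0 ≤ z.im * (inner ℂ f (Ω z f) : ℂ).im) ∧
  (∀ x : ℝ, -1 < x → x < 1 →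
    ((1 : M →L[ℂ] M) - Ω (x : ℂ)).IsPositive ∧ ((1 : M →L[ℂ] M) + Ω (x : ℂ)).IsPositive)

lemma Zdom_open : IsOpen Zdom := by
  have : Zdom = ((fun x : ℝ => (x : ℂ)) '' (Set.Iic (-1) ∪ Set.Ici 1))ᶜ := rfl
  rw [this]
  exact (Complex.isUniformEmbedding_ofReal.isClosedEmbedding.isClosedMap _
    ((isClosed_Iic.union isClosed_Ici))).isOpen_compl

lemma mem_Zdom_of_im_ne (z : ℂ) (hz : z.im ≠ 0) : z ∈ Zdom := by
  intro ⟨x, _, hx⟩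
  apply hz
  rw [← hx]
  simp

lemma mem_Zdom_real {x : ℝ} (h1 : -1 < x) (h2 : x < 1) : (x : ℂ) ∈ Zdom := by
  rintro ⟨t, ht, hteq⟩
  have : t = x := by exact_mod_cast congrArg Complex.re hteq
  subst this
  rcases ht with h | h
  · exact absurd (Set.mem_Iic.mp h) (by linarith)
  · exact absurd (Set.mem_Ici.mp h) (by linarith)


lemma RS_adjoint_real (Ω : ℂ → (M →L[ℂ] M)) (hRS : IsRS Ω) {x : ℝ}
    (h1 : -1 < x) (h2 : x < 1) : adjoint (Ω (x : ℂ)) = Ω (x : ℂ) := by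
  have h := hRS.2.1 (x : ℂ) (mem_Zdom_real h1 h2)
  rw [Complex.conj_ofReal] at h
  exact h.symm

lemma RS_inner_real (Ω : ℂ → (M →L[ℂ] M)) (hRS : IsRS Ω) {x : ℝ}
    (h1 : -1 < x) (h2 : x < 1) (f : M) : (inner ℂ f (Ω (x : ℂ) f) : ℂ).im = 0 := by
  rw [← Complex.conj_eq_iff_im, inner_conj_symm (𝕜 := ℂ) (Ω (x : ℂ) f) f]
  nth_rewrite 1 [← RS_adjoint_real Ω hRS h1 h2]
  exact adjoint_inner_left _ f f

lemma div_I_mul_re (w : ℂ) (y : ℝ) : (w / (Complex.I * y)).re = w.im / y := by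
  by_cases hy : y = 0
  · simp [hy]
  · rw [Complex.div_re]
    simp [Complex.normSq_apply]
    field_simp

lemma RS_mono (Ω : ℂ → (M →L[ℂ] M)) (hRS : IsRS Ω) (f : M) :
    MonotoneOn (fun x : ℝ => (inner ℂ f (Ω (x : ℂ) f) : ℂ).re) (Set.Ioo (-1) 1) := by
  set φ : ℂ → ℂ := fun z => inner ℂ f (Ω z f) with hφdef
  have hφ : DifferentiableOn ℂ φ Zdom := by
    have h1 : DifferentiableOn ℂ (fun z => Ω z f) Zdom :=
      hRS.1.clm_apply (differentiableOn_const f)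
    exact (innerSL ℂ f).differentiable.comp_differentiableOn h1
  have hdiff : ∀ x : ℝ, x ∈ Set.Ioo (-1 : ℝ) 1 → HasDerivAt φ (deriv φ (x : ℂ)) (x : ℂ) := by
    intro x hx
    exact (hφ.differentiableAt
      (Zdom_open.mem_nhds (mem_Zdom_real hx.1 hx.2))).hasDerivAt
  have hderiv_nonneg : ∀ x : ℝ, x ∈ Set.Ioo (-1 : ℝ) 1 → 0 ≤ (deriv φ (x : ℂ)).re := by
    intro x hx
    have hd := hdiff x hx
    have hmap : Filter.Tendsto (fun y : ℝ => (x : ℂ) + Complex.I * y)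
        (nhdsWithin 0 (Set.Ioi 0)) (nhdsWithin (x : ℂ) {(x : ℂ)}ᶜ) := by
      rw [tendsto_nhdsWithin_iff]
      constructor
      · have hc : Continuous (fun y : ℝ => (x : ℂ) + Complex.I * y) := by continuity
        have := (hc.tendsto 0).mono_left (nhdsWithin_le_nhds :
          nhdsWithin (0:ℝ) (Set.Ioi 0) ≤ nhds 0)
        simpa using this
      · filter_upwards [self_mem_nhdsWithin] with y hy
        simp only [Set.mem_compl_iff, Set.mem_singleton_iff]
        intro hcon
        have : ((x : ℂ) + Complex.I * y).im = (x : ℂ).im := by rw [hcon]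
        simp at this
        exact absurd this (ne_of_gt hy)
    have T : Filter.Tendsto (fun y : ℝ => slope φ (x : ℂ) ((x : ℂ) + Complex.I * y))
        (nhdsWithin 0 (Set.Ioi 0)) (nhds (deriv φ (x : ℂ))) :=
      (hasDerivAt_iff_tendsto_slope.mp hd).comp hmap
    have Tre : Filter.Tendsto (fun y : ℝ =>
        (slope φ (x : ℂ) ((x : ℂ) + Complex.I * y)).re)
        (nhdsWithin 0 (Set.Ioi 0)) (nhds (deriv φ (x : ℂ)).re) :=
      (Complex.continuous_re.tendsto _).comp T
    refine ge_of_tendsto Tre ?_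
    filter_upwards [self_mem_nhdsWithin] with y hy
    have hy0 : (0:ℝ) < y := hy
    set z : ℂ := (x : ℂ) + Complex.I * y with hz
    have him : z.im = y := by simp [hz]
    have hzZ : z ∈ Zdom := mem_Zdom_of_im_ne z (by rw [him]; exact ne_of_gt hy0)
    have himpos : 0 ≤ (φ z).im := by
      have := hRS.2.2.1 z hzZ (by rw [him]; exact ne_of_gt hy0) f
      rw [him] at this
      exact nonneg_of_mul_nonneg_right this hy0
    rw [slope_def_field]
    have hsub : z - (x : ℂ) = Complex.I * y := by rw [hz]; ring
    rw [hsub, div_I_mul_re]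
    have hre : (φ z - φ (x : ℂ)).im = (φ z).im := by
      rw [Complex.sub_im, RS_inner_real Ω hRS hx.1 hx.2 f, sub_zero]
    rw [hre]
    exact div_nonneg himpos (le_of_lt hy0)
  have hreal : ∀ x : ℝ, x ∈ Set.Ioo (-1:ℝ) 1 →
      HasDerivAt (fun t : ℝ => (φ (t : ℂ)).re) (deriv φ (x : ℂ)).re x := by
    intro x hx
    exact (hdiff x hx).real_of_complex
  have hio : interior (Set.Ioo (-1:ℝ) 1) = Set.Ioo (-1:ℝ) 1 := interior_Ioo
  refine monotoneOn_of_deriv_nonneg (convex_Ioo _ _) ?_ ?_ ?_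
  · intro x hx
    exact ((hreal x hx).continuousAt).continuousWithinAt
  · rw [hio]
    intro x hx
    exact ((hreal x hx).differentiableAt).differentiableWithinAt
  · rw [hio]
    intro x hx
    rw [(hreal x hx).deriv]
    exact hderiv_nonneg x hx

set_option maxHeartbeats 1000000 in
/-- For `Ω ∈ RS(M)` with strong limit values `Ω(1)` (as `x → 1⁻`) and
`Ω(−1)` (as `x → −1⁺`), one has `Ω(1)² = Ω(−1)² = I` if and only if
`((Ω(1) − Ω(−1))/2)² = (Ω(1) − Ω(−1))/2` and `((Ω(1) + Ω(−1))/2)² = I − (Ω(1) − Ω(−1))/2`. -/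
theorem limit_values_square_identity (Ω : ℂ → (M →L[ℂ] M)) (hRS : IsRS Ω)
    (A1 Am1 : M →L[ℂ] M)
    (hA1 : ∀ f : M, Filter.Tendsto (fun x : ℝ => Ω (x : ℂ) f)
      (nhdsWithin 1 (Set.Iio 1)) (nhds (A1 f)))
    (hAm1 : ∀ f : M, Filter.Tendsto (fun x : ℝ => Ω (x : ℂ) f)
      (nhdsWithin (-1) (Set.Ioi (-1))) (nhds (Am1 f))) :
    (A1 * A1 = 1 ∧ Am1 * Am1 = 1) ↔
      (((2 : ℂ)⁻¹ • (A1 - Am1)) * ((2 : ℂ)⁻¹ • (A1 - Am1)) = (2 : ℂ)⁻¹ • (A1 - Am1) ∧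
       ((2 : ℂ)⁻¹ • (A1 + Am1)) * ((2 : ℂ)⁻¹ • (A1 + Am1)) = 1 - (2 : ℂ)⁻¹ • (A1 - Am1)) := by
  -- self-adjointness of the limit operators
  have hIoo1 : Set.Ioo (0:ℝ) 1 ∈ nhdsWithin (1:ℝ) (Set.Iio 1) :=
    Ioo_mem_nhdsLT_of_mem (by constructor <;> norm_num)
  have hIoom : Set.Ioo (-1:ℝ) 0 ∈ nhdsWithin (-1:ℝ) (Set.Ioi (-1)) :=
    Ioo_mem_nhdsGT_of_mem (by constructor <;> norm_num)
  have hsym1 : ∀ f g : M, (inner ℂ (A1 f) g : ℂ) = inner ℂ f (A1 g) := by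
    intro f g
    have h1 : Filter.Tendsto (fun x : ℝ => (inner ℂ (Ω (x:ℂ) f) g : ℂ))
        (nhdsWithin 1 (Set.Iio 1)) (nhds (inner ℂ (A1 f) g : ℂ)) :=
      Filter.Tendsto.inner (𝕜 := ℂ) (hA1 f) tendsto_const_nhds
    have h2 : Filter.Tendsto (fun x : ℝ => (inner ℂ f (Ω (x:ℂ) g) : ℂ))
        (nhdsWithin 1 (Set.Iio 1)) (nhds (inner ℂ f (A1 g) : ℂ)) :=
      Filter.Tendsto.inner (𝕜 := ℂ) tendsto_const_nhds (hA1 g)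
    refine tendsto_nhds_unique (h1.congr' ?_) h2
    filter_upwards [hIoo1] with x hx
    have hadj := RS_adjoint_real Ω hRS (by linarith [hx.1] : (-1:ℝ) < x) hx.2
    nth_rewrite 1 [← hadj]
    exact adjoint_inner_left _ g f
  have hsymm1 : ∀ f g : M, (inner ℂ (Am1 f) g : ℂ) = inner ℂ f (Am1 g) := by
    intro f g
    have h1 : Filter.Tendsto (fun x : ℝ => (inner ℂ (Ω (x:ℂ) f) g : ℂ))
        (nhdsWithin (-1) (Set.Ioi (-1))) (nhds (inner ℂ (Am1 f) g : ℂ)) :=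
      Filter.Tendsto.inner (𝕜 := ℂ) (hAm1 f) tendsto_const_nhds
    have h2 : Filter.Tendsto (fun x : ℝ => (inner ℂ f (Ω (x:ℂ) g) : ℂ))
        (nhdsWithin (-1) (Set.Ioi (-1))) (nhds (inner ℂ f (Am1 g) : ℂ)) :=
      Filter.Tendsto.inner (𝕜 := ℂ) tendsto_const_nhds (hAm1 g)
    refine tendsto_nhds_unique (h1.congr' ?_) h2
    filter_upwards [hIoom] with x hx
    have hadj := RS_adjoint_real Ω hRS hx.1 (by linarith [hx.2] : x < 1)
    nth_rewrite 1 [← hadj]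
    exact adjoint_inner_left _ g f
  have sa1 : IsSelfAdjoint A1 :=
    isSelfAdjoint_iff'.mpr (((ContinuousLinearMap.eq_adjoint_iff A1 A1).mpr hsym1).symm)
  have sam1 : IsSelfAdjoint Am1 :=
    isSelfAdjoint_iff'.mpr (((ContinuousLinearMap.eq_adjoint_iff Am1 Am1).mpr hsymm1).symm)
  -- A1 ≥ Am1 : monotonicity
  have posd : ∀ f : M, 0 ≤ (inner ℂ f ((A1 - Am1) f) : ℂ).re := by
    intro f
    have hmono := RS_mono Ω hRS f
    have hlim1 : Filter.Tendsto (fun x : ℝ => (inner ℂ f (Ω (x:ℂ) f) : ℂ).re)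
        (nhdsWithin 1 (Set.Iio 1)) (nhds ((inner ℂ f (A1 f) : ℂ).re)) :=
      (Complex.continuous_re.tendsto _).comp (Filter.Tendsto.inner (𝕜 := ℂ) tendsto_const_nhds (hA1 f))
    have hlimm : Filter.Tendsto (fun x : ℝ => (inner ℂ f (Ω (x:ℂ) f) : ℂ).re)
        (nhdsWithin (-1) (Set.Ioi (-1))) (nhds ((inner ℂ f (Am1 f) : ℂ).re)) :=
      (Complex.continuous_re.tendsto _).comp (Filter.Tendsto.inner (𝕜 := ℂ) tendsto_const_nhds (hAm1 f))
    have h0 : (0:ℝ) ∈ Set.Ioo (-1:ℝ) 1 := by constructor <;> norm_num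
    have hge : (inner ℂ f ((Ω ((0:ℝ):ℂ)) f) : ℂ).re ≤ (inner ℂ f (A1 f) : ℂ).re := by
      refine ge_of_tendsto hlim1 ?_
      filter_upwards [hIoo1] with x hx
      exact hmono h0 ⟨by linarith [hx.1], hx.2⟩ (le_of_lt hx.1)
    have hle : (inner ℂ f (Am1 f) : ℂ).re ≤ (inner ℂ f ((Ω ((0:ℝ):ℂ)) f) : ℂ).re := by
      refine le_of_tendsto hlimm ?_
      filter_upwards [hIoom] with x hx
      exact hmono ⟨hx.1, by linarith [hx.2]⟩ h0 (le_of_lt hx.2)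
    have : (inner ℂ f ((A1 - Am1) f) : ℂ).re
        = (inner ℂ f (A1 f) : ℂ).re - (inner ℂ f (Am1 f) : ℂ).re := by
      rw [ContinuousLinearMap.sub_apply, inner_sub_right, Complex.sub_re]
    rw [this]
    linarith
  constructor
  · rintro ⟨h1, h2⟩
    -- key: (1 - A1) * (1 + Am1) = 0
    have hPQ : ((1 : M →L[ℂ] M) - A1) * ((1 : M →L[ℂ] M) + Am1) = 0 := by
      ext f
      set g : M := ((1 : M →L[ℂ] M) + Am1) f with hg
      have hPg : ((1 : M →L[ℂ] M) - A1) g = -((A1 - Am1) g) := by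
        have hAm : Am1 (Am1 f) = f := by
          have := congrArg (fun T : M →L[ℂ] M => T f) h2
          simpa [ContinuousLinearMap.mul_apply] using this
        simp only [hg, ContinuousLinearMap.sub_apply, ContinuousLinearMap.add_apply,
          ContinuousLinearMap.one_apply, map_add, hAm]
        abel
      have hinnerPg : (inner ℂ g (((1 : M →L[ℂ] M) - A1) g) : ℂ).re ≤ 0 := by
        rw [hPg, inner_neg_right, Complex.neg_re, neg_nonpos]
        exact posd g
      have hP2 : ∀ h : M, ((1 : M →L[ℂ] M) - A1) (((1 : M →L[ℂ] M) - A1) h)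
          = ((1 : M →L[ℂ] M) - A1) h + ((1 : M →L[ℂ] M) - A1) h := by
        intro h
        have e : ((1 : M →L[ℂ] M) - A1) * ((1 : M →L[ℂ] M) - A1)
            = (1 : M →L[ℂ] M) - A1 - A1 + A1 * A1 := by noncomm_ring
        rw [h1] at e
        have e2 : ((1 : M →L[ℂ] M) - A1) * ((1 : M →L[ℂ] M) - A1)
            = ((1 : M →L[ℂ] M) - A1) + ((1 : M →L[ℂ] M) - A1) := by rw [e]; abel
        have := congrArg (fun T : M →L[ℂ] M => T h) e2
        simpa [ContinuousLinearMap.mul_apply] using this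
      have hnorm : ‖((1 : M →L[ℂ] M) - A1) g‖^2
          = (inner ℂ g (((1 : M →L[ℂ] M) - A1) (((1 : M →L[ℂ] M) - A1) g)) : ℂ).re := by
        have saP : IsSelfAdjoint ((1 : M →L[ℂ] M) - A1) := (IsSelfAdjoint.one (M →L[ℂ] M)).sub sa1
        have hip : (inner ℂ (((1 : M →L[ℂ] M) - A1) g) (((1 : M →L[ℂ] M) - A1) g) : ℂ)
            = inner ℂ g (((1 : M →L[ℂ] M) - A1) (((1 : M →L[ℂ] M) - A1) g)) := by
          nth_rewrite 1 [← isSelfAdjoint_iff'.mp saP]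
          exact adjoint_inner_left _ (((1 : M →L[ℂ] M) - A1) g) g
        rw [← hip, inner_self_eq_norm_sq_to_K]
        norm_cast
      rw [hP2 g, inner_add_right, Complex.add_re] at hnorm
      have hzerosq : ‖((1 : M →L[ℂ] M) - A1) g‖^2 ≤ 0 := by rw [hnorm]; linarith
      have : ((1 : M →L[ℂ] M) - A1) g = 0 := by
        have := le_antisymm hzerosq (sq_nonneg _)
        simpa [pow_eq_zero_iff] using this
      simpa [ContinuousLinearMap.mul_apply, hg] using this
    have hQP : ((1 : M →L[ℂ] M) + Am1) * ((1 : M →L[ℂ] M) - A1) = 0 := by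
      have := congrArg star hPQ
      simpa [star_mul, sa1.star_eq, sam1.star_eq] using this
    -- extract the mixed products
    have e1 : ((1 : M →L[ℂ] M) - A1) * ((1 : M →L[ℂ] M) + Am1)
        = (1 : M →L[ℂ] M) + Am1 - A1 - A1 * Am1 := by noncomm_ring
    have e2 : ((1 : M →L[ℂ] M) + Am1) * ((1 : M →L[ℂ] M) - A1)
        = (1 : M →L[ℂ] M) - A1 + Am1 - Am1 * A1 := by noncomm_ring
    rw [e1] at hPQ
    rw [e2] at hQP
    have hab : A1 * Am1 = (1 : M →L[ℂ] M) + Am1 - A1 := (sub_eq_zero.mp hPQ).symm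
    have hba : Am1 * A1 = (1 : M →L[ℂ] M) - A1 + Am1 := (sub_eq_zero.mp hQP).symm
    constructor
    · have hD : (A1 - Am1) * (A1 - Am1) = (2:ℂ) • (A1 - Am1) := by
        have e : (A1 - Am1) * (A1 - Am1) = A1 * A1 - A1 * Am1 - Am1 * A1 + Am1 * Am1 := by
          noncomm_ring
        rw [e, h1, h2, hab, hba, two_smul]
        abel
      rw [smul_mul_assoc, mul_smul_comm, smul_smul, hD]
      module
    · have hS : (A1 + Am1) * (A1 + Am1) = (4:ℂ) • (1 : M →L[ℂ] M) - (2:ℂ) • (A1 - Am1) := by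
        have e : (A1 + Am1) * (A1 + Am1) = A1 * A1 + A1 * Am1 + Am1 * A1 + Am1 * Am1 := by
          noncomm_ring
        rw [e, h1, h2, hab, hba]
        have h4 : (4:ℂ) • (1 : M →L[ℂ] M) = 1 + 1 + 1 + 1 := by
          rw [show (4:ℂ) = (2:ℂ) + 2 from by norm_num, add_smul, two_smul]
          abel
        rw [h4, two_smul]
        abel
      rw [smul_mul_assoc, mul_smul_comm, smul_smul, hS]
      module
  · rintro ⟨hB, hC⟩
    set B : M →L[ℂ] M := (2:ℂ)⁻¹ • (A1 - Am1) with hBdef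
    set C : M →L[ℂ] M := (2:ℂ)⁻¹ • (A1 + Am1) with hCdef
    have sB : IsSelfAdjoint B := by
      have h := sa1.sub sam1
      rw [hBdef]
      unfold IsSelfAdjoint
      rw [star_smul, h.star_eq]
      norm_num
    have sC : IsSelfAdjoint C := by
      have h := sa1.add sam1
      rw [hCdef]
      unfold IsSelfAdjoint
      rw [star_smul, h.star_eq]
      norm_num
    have hCCB : C * (C * B) = 0 := by
      rw [← mul_assoc, hC]
      rw [sub_mul, one_mul, hB, sub_self]
    have hCB : C * B = 0 := by
      ext f
      have h0 : C (C (B f)) = 0 := by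
        have := congrArg (fun T : M →L[ℂ] M => T f) hCCB
        simpa [ContinuousLinearMap.mul_apply] using this
      have hn : ‖C (B f)‖^2 = 0 := by
        have : (inner ℂ (C (B f)) (C (B f)) : ℂ) = inner ℂ (B f) (C (C (B f))) := by
          nth_rewrite 1 [← isSelfAdjoint_iff'.mp sC]
          exact adjoint_inner_left _ (C (B f)) (B f)
        have h2 : (inner ℂ (C (B f)) (C (B f)) : ℂ) = 0 := by rw [this, h0, inner_zero_right]
        rw [inner_self_eq_norm_sq_to_K] at h2
        exact Complex.ofReal_eq_zero.mp (by push_cast; exact h2)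
      have : C (B f) = 0 := by
        have := pow_eq_zero_iff (n := 2) (by norm_num) |>.mp hn
        exact norm_eq_zero.mp this
      simpa [ContinuousLinearMap.mul_apply] using this
    have hBC : B * C = 0 := by
      have := congrArg star hCB
      simpa [star_mul, sB.star_eq, sC.star_eq] using this
    have hA1e : C + B = A1 := by rw [hBdef, hCdef]; module
    have hAm1e : C - B = Am1 := by rw [hBdef, hCdef]; module
    constructor
    · rw [← hA1e]
      have e : (C + B) * (C + B) = C * C + C * B + B * C + B * B := by noncomm_ring
      rw [e, hC, hCB, hBC, hB]
      abel
    · rw [← hAm1e]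
      have e : (C - B) * (C - B) = C * C - C * B - B * C + B * B := by noncomm_ring
      rw [e, hC, hCB, hBC, hB]
      abel
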